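/- Let K be a nonempty subset of the state set of a DFA such that every pair (p,q) with p, q ∈ K is stable. Then K is synchronizable, i.e., there is a word w with |K·w| = 1. -/

import Mathlib

/-- Action of a word (list of letters) on a state: the empty word acts as the
identity and a word acts by composition of the letter actions. -/
def actW {Q A : Type*} (δ : A → Q → Q) (w : List A) (q : Q) : Q :=
  w.foldl (fun s x => δ x s) q

/-- A pair of states `(p,q)` is stable if for every word `u` there is a word
`v` with `p·uv = q·uv`. -/
def Stable {Q A : Type*} (δ : A → Q → Q) (p q : Q) : Prop :=
  ∀ u : List A, ∃ v : List A, actW δ (u ++ v) p = actW δ (u ++ v) q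

/-- If `K` is a nonempty set of states all of whose pairs are stable, then `K`
is synchronizable: some word maps `K` to a single state. -/
theorem stmt15 {Q A : Type*} [Fintype Q] (δ : A → Q → Q) (K : Set Q)
    (hK : K.Nonempty) (hst : ∀ p ∈ K, ∀ q ∈ K, Stable δ p q) :
    ∃ w : List A, Nat.card ((fun s => actW δ w s) '' K) = 1 := by
  classical
  suffices h : ∀ n : ℕ, ∀ w : List A, ((fun s => actW δ w s) '' K).ncard ≤ n →
      ∃ w' : List A, ((fun s => actW δ w' s) '' K).ncard = 1 by
    obtain ⟨w', hw'⟩ := h (((fun s => actW δ ([] : List A) s) '' K).ncard) [] le_rfl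
    exact ⟨w', by rw [Nat.card_coe_set_eq]; exact hw'⟩
  intro n
  induction n with
  | zero =>
    intro w hw
    exfalso
    have hne : ((fun s => actW δ w s) '' K).Nonempty := hK.image _
    have := hne.ncard_pos (Set.toFinite _)
    omega
  | succ n ih =>
    intro w hw
    rcases le_or_gt (((fun s => actW δ w s) '' K).ncard) n with h | h
    · exact ih w h
    have hcard : ((fun s => actW δ w s) '' K).ncard = n + 1 := le_antisymm hw h
    rcases Nat.eq_zero_or_pos n with rfl | hn
    · exact ⟨w, hcard⟩
    -- card ≥ 2: pick two distinct elements of the image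
    obtain ⟨p', hp', q', hq', hpq⟩ :
        ∃ p' ∈ (fun s => actW δ w s) '' K, ∃ q' ∈ (fun s => actW δ w s) '' K, p' ≠ q' := by
      have : 1 < ((fun s => actW δ w s) '' K).ncard := by omega
      rw [Set.one_lt_ncard_iff (Set.toFinite _)] at this
      obtain ⟨a, b, ha, hb, hab⟩ := this
      exact ⟨a, ha, b, hb, hab⟩
    obtain ⟨p, hpK, rfl⟩ := hp'
    obtain ⟨q, hqK, rfl⟩ := hq'
    obtain ⟨v, hv⟩ := hst p hpK q hqK w
    apply ih (w ++ v)
    -- key rewriting: actW δ (w ++ v) s = actW δ v (actW δ w s)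
    have happ : ∀ s : Q, actW δ (w ++ v) s = actW δ v (actW δ w s) := by
      intro s; simp [actW, List.foldl_append]
    have himg : (fun s => actW δ (w ++ v) s) '' K
        = (fun t => actW δ v t) '' ((fun s => actW δ w s) '' K) := by
      rw [← Set.image_comp]
      exact Set.image_congr fun s _ => happ s
    rw [himg]
    -- the map merges actW δ w p and actW δ w q, so image is strictly smaller
    set S := (fun s => actW δ w s) '' K with hS
    have hmem_p : actW δ w p ∈ S := ⟨p, hpK, rfl⟩
    have hmem_q : actW δ w q ∈ S := ⟨q, hqK, rfl⟩
    have hfv : actW δ v (actW δ w p) = actW δ v (actW δ w q) := by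
      rw [← happ p, ← happ q]; exact hv
    have hsub : (fun t => actW δ v t) '' S = (fun t => actW δ v t) '' (S \ {actW δ w q}) := by
      apply Set.Subset.antisymm
      · rintro x ⟨t, htS, rfl⟩
        by_cases ht : t = actW δ w q
        · subst ht
          exact ⟨actW δ w p, ⟨hmem_p, by simpa using hpq⟩, hfv⟩
        · exact ⟨t, ⟨htS, ht⟩, rfl⟩
      · exact Set.image_mono (Set.diff_subset)
    rw [hsub]
    have hlt : ((fun t => actW δ v t) '' (S \ {actW δ w q})).ncard < n + 1 := by
      calc ((fun t => actW δ v t) '' (S \ {actW δ w q})).ncard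
          ≤ (S \ {actW δ w q}).ncard := Set.ncard_image_le (Set.toFinite _)
        _ < S.ncard := Set.ncard_diff_singleton_lt_of_mem hmem_q (Set.toFinite _)
        _ ≤ n + 1 := hw
    omega
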